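/- The Haar measure λ is an extreme point of the set of invariant probability measures on 𝕋: if λ = α • μ₁ + (1 − α) • μ₂ where 0 < α < 1 and μ₁, μ₂ are invariant probability measures on 𝕋, then μ₁ = λ and μ₂ = λ. -/

import Mathlib

open MeasureTheory

noncomputable section

/-- The circle `[0,1]` with endpoints identified. -/
abbrev 𝕋 := AddCircle (1 : ℝ)

instance : IsProbabilityMeasure (volume : Measure 𝕋) :=
  ⟨by simp [AddCircle.measure_univ]⟩

/-- The doubling map. -/
def T (x : 𝕋) : 𝕋 := 2 • x

/-- The tripling map. -/
def S (x : 𝕋) : 𝕋 := 3 • x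

/-- A set is invariant if it is forward invariant under both `T` and `S`. -/
def Invariant (O : Set 𝕋) : Prop := T '' O ⊆ O ∧ S '' O ⊆ O

/-- A nonempty finite invariant set is minimal if every nonempty invariant subset equals it. -/
def MinimalInvariant (O : Set 𝕋) : Prop :=
  O.Nonempty ∧ O.Finite ∧ Invariant O ∧
    ∀ O' ⊆ O, O'.Nonempty → Invariant O' → O' = O

/-- A measure is invariant if both `T` and `S` are measure preserving for it. -/
def InvariantMeasure (μ : Measure 𝕋) : Prop :=
  MeasurePreserving T μ μ ∧ MeasurePreserving S μ μ

/-- The normalized counting measure on a set: each point of a finite set `O`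
gets mass `1 / |O|`. -/
def normCount (O : Set 𝕋) : Measure 𝕋 :=
  (O.ncard : ENNReal)⁻¹ • Measure.count.restrict O

/-- `Fn n` is the set of points `i/n` of the circle with `0 < i < n`. -/
def Fn (n : ℕ) : Set 𝕋 := {x : 𝕋 | ∃ i : ℕ, 0 < i ∧ i < n ∧ x = ((i : ℝ) / n : ℝ)}


/-- Walters: an invariant probability measure absolutely continuous w.r.t. an ergodic
probability measure equals it. -/
lemma eq_of_ergodic_of_absolutelyContinuous {X : Type*} [MeasurableSpace X] {f : X → X}
    {μ ν : Measure X} [IsProbabilityMeasure μ] [IsProbabilityMeasure ν]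
    (herg : Ergodic f μ) (hν : MeasurePreserving f ν ν) (hac : ν ≪ μ) : ν = μ := by
  set g : X → ENNReal := ν.rnDeriv μ with hgdef
  have hg : Measurable g := ν.measurable_rnDeriv μ
  have hgν : μ.withDensity g = ν := Measure.withDensity_rnDeriv_eq ν μ hac
  have νA : ∀ {A : Set X}, MeasurableSet A → ν A = ∫⁻ x in A, g x ∂μ := by
    intro A hA
    rw [← hgν, withDensity_apply _ hA]
  set B : Set X := {x | g x < 1} with hBdef
  have hB : MeasurableSet B := measurableSet_lt hg measurable_const
  have hmf : Measurable f := herg.toMeasurePreserving.measurable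
  have hfB : MeasurableSet (f ⁻¹' B) := hmf hB
  have hμB : μ (f ⁻¹' B) = μ B := herg.toMeasurePreserving.measure_preimage hB.nullMeasurableSet
  have hνB : ν (f ⁻¹' B) = ν B := hν.measure_preimage hB.nullMeasurableSet
  set D₁ : Set X := B \ f ⁻¹' B with hD₁def
  set D₂ : Set X := f ⁻¹' B \ B with hD₂def
  have hD₁ : MeasurableSet D₁ := hB.diff hfB
  have hD₂ : MeasurableSet D₂ := hfB.diff hB
  have hdiff : ∀ (ρ : Measure X) [IsFiniteMeasure ρ], ρ (f ⁻¹' B) = ρ B → ρ D₁ = ρ D₂ := by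
    intro ρ _ hρ
    have e1 : ρ (B ∩ f ⁻¹' B) + ρ D₁ = ρ B := measure_inter_add_diff B hfB
    have e2 : ρ (B ∩ f ⁻¹' B) + ρ D₂ = ρ B := by
      rw [Set.inter_comm, ← hρ]; exact measure_inter_add_diff (f ⁻¹' B) hB
    have := e1.trans e2.symm
    exact (ENNReal.add_right_inj (measure_ne_top ρ _)).mp this
  have hμD : μ D₁ = μ D₂ := hdiff μ hμB
  have hνD : ν D₁ = ν D₂ := hdiff ν hνB
  -- ν D₁ ≤ μ D₁ since g < 1 on D₁ ⊆ B
  have hle1 : ν D₁ ≤ μ D₁ := by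
    rw [νA hD₁]
    calc ∫⁻ x in D₁, g x ∂μ ≤ ∫⁻ _x in D₁, 1 ∂μ :=
          setLIntegral_mono' hD₁ fun x hx => (hx.1 : g x < 1).le
      _ = μ D₁ := by simp
  -- μ D₂ ≤ ν D₂ since g ≥ 1 on D₂ ⊆ Bᶜ
  have hle2 : μ D₂ ≤ ν D₂ := by
    rw [νA hD₂]
    calc μ D₂ = ∫⁻ _x in D₂, 1 ∂μ := by simp
      _ ≤ ∫⁻ x in D₂, g x ∂μ :=
          setLIntegral_mono' hD₂ fun x hx => not_lt.mp (hx.2 : x ∉ B)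
  -- hence ν D₁ = μ D₁
  have hkey : ν D₁ = μ D₁ := le_antisymm hle1 (by rw [hμD, hνD]; exact hle2)
  -- g < 1 on D₁ and ∫_{D₁} g = μ D₁ forces μ D₁ = 0
  have hμD₁ : μ D₁ = 0 := by
    have hsum : (∫⁻ x in D₁, g x ∂μ) + ∫⁻ x in D₁, (1 - g x) ∂μ = μ D₁ := by
      rw [← lintegral_add_left hg]
      have : ∀ x ∈ D₁, g x + (1 - g x) = 1 := fun x hx =>
        add_tsub_cancel_of_le (hx.1 : g x < 1).le
      rw [setLIntegral_congr_fun hD₁ this]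
      simp
    rw [← νA hD₁, hkey] at hsum
    have hfin : μ D₁ ≠ ⊤ := measure_ne_top μ _
    have hz : ∫⁻ x in D₁, (1 - g x) ∂μ = 0 :=
      (ENNReal.add_right_inj hfin).mp (hsum.trans (add_zero (μ D₁)).symm)
    have h3 : ∀ᵐ x ∂μ, x ∈ D₁ → 1 - g x = 0 :=
      (setLIntegral_eq_zero_iff hD₁ (measurable_const.sub hg)).mp hz
    refine measure_mono_null ?_ (ae_iff.mp h3)
    intro x hx
    simp only [Set.mem_setOf_eq, Classical.not_imp]
    exact ⟨hx, (tsub_pos_of_lt (hx.1 : g x < 1)).ne'⟩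
  have hμD₂ : μ D₂ = 0 := by rw [← hμD]; exact hμD₁
  -- B is almost invariant, so by ergodicity it is null or conull
  have hBae : f ⁻¹' B =ᵐ[μ] B := by
    rw [ae_eq_set]
    exact ⟨hμD₂, hμD₁⟩
  rcases herg.quasiErgodic.ae_empty_or_univ₀ hB.nullMeasurableSet hBae with hcase | hcase
  · -- g ≥ 1 a.e.
    have hge : ∀ᵐ x ∂μ, 1 ≤ g x := by
      have h0 : μ B = 0 := ae_eq_empty.mp hcase
      rw [ae_iff]
      convert h0 using 2
      ext x
      simp [hBdef, not_le]
    have htot : ∫⁻ x, g x ∂μ = 1 := by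
      have h := νA MeasurableSet.univ
      rw [measure_univ, Measure.restrict_univ] at h
      exact h.symm
    -- ∫ (g - 1) = 0
    have hsum : (1 : ENNReal) + ∫⁻ x, (g x - 1) ∂μ = 1 := by
      have : ∫⁻ x, (1 + (g x - 1)) ∂μ = ∫⁻ x, g x ∂μ :=
        lintegral_congr_ae (hge.mono fun x hx => add_tsub_cancel_of_le hx)
      rw [lintegral_add_left measurable_const] at this
      simpa [htot] using this
    have hz : ∫⁻ x, (g x - 1) ∂μ = 0 :=
      (ENNReal.add_right_inj ENNReal.one_ne_top).mp (hsum.trans (add_zero 1).symm)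
    have hle : ∀ᵐ x ∂μ, g x ≤ 1 := by
      have := (lintegral_eq_zero_iff (hg.sub measurable_const)).mp hz
      filter_upwards [this] with x hx
      simpa [tsub_eq_zero_iff_le] using hx
    have hone : g =ᵐ[μ] 1 := by
      filter_upwards [hge, hle] with x h1 h2
      exact le_antisymm h2 h1
    rw [← hgν, withDensity_congr_ae hone, withDensity_one]
  · -- g < 1 a.e.: contradiction
    exfalso
    have hlt : ∀ᵐ x ∂μ, g x < 1 := by
      have h0 : μ Bᶜ = 0 := ae_eq_univ.mp hcase
      rw [ae_iff]
      have he : {a | ¬ g a < 1} = Bᶜ := by ext x; simp [hBdef]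
      rw [he]; exact h0
    have htot : ∫⁻ x, g x ∂μ = 1 := by
      have := νA MeasurableSet.univ
      rw [measure_univ, Measure.restrict_univ] at this
      exact this.symm
    have hsum : (∫⁻ x, g x ∂μ) + ∫⁻ x, (1 - g x) ∂μ = 1 := by
      rw [← lintegral_add_left hg]
      have : ∫⁻ x, (g x + (1 - g x)) ∂μ = ∫⁻ _x, (1 : ENNReal) ∂μ :=
        lintegral_congr_ae (hlt.mono fun x hx => add_tsub_cancel_of_le hx.le)
      rw [this]; simp
    have hz : ∫⁻ x, (1 - g x) ∂μ = 0 := by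
      rw [htot] at hsum
      exact (ENNReal.add_right_inj ENNReal.one_ne_top).mp (hsum.trans (add_zero 1).symm)
    have hge : ∀ᵐ x ∂μ, 1 ≤ g x := by
      have := (lintegral_eq_zero_iff (measurable_const.sub hg)).mp hz
      filter_upwards [this] with x hx
      simpa [tsub_eq_zero_iff_le] using hx
    obtain ⟨x, h1, h2⟩ := (hlt.and hge).exists
    exact absurd h2 (not_le.mpr h1)

/-- The Haar measure is an extreme point of the set of invariant probability measures:
any representation of it as a nontrivial convex combination of invariant probability
measures is trivial. -/
theorem haar_extreme_point (α : ENNReal) (hα0 : 0 < α) (hα1 : α < 1)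
    (μ₁ μ₂ : Measure 𝕋) [IsProbabilityMeasure μ₁] [IsProbabilityMeasure μ₂]
    (h₁ : InvariantMeasure μ₁) (h₂ : InvariantMeasure μ₂)
    (h : (volume : Measure 𝕋) = α • μ₁ + (1 - α) • μ₂) :
    μ₁ = volume ∧ μ₂ = volume := by
  have herg : Ergodic T (volume : Measure 𝕋) :=
    AddCircle.ergodic_nsmul (by norm_num : 1 < 2)
  have hα0' : α ≠ 0 := hα0.ne'
  have hα1' : (1 : ENNReal) - α ≠ 0 := by
    exact fun hc => absurd (tsub_eq_zero_iff_le.mp hc) (not_le.mpr hα1)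
  have hac : ∀ {s : Set 𝕋}, (volume : Measure 𝕋) s = 0 → μ₁ s = 0 ∧ μ₂ s = 0 := by
    intro s hs
    rw [h] at hs
    simp only [Measure.coe_add, Pi.add_apply, Measure.smul_apply, smul_eq_mul,
      add_eq_zero, mul_eq_zero] at hs
    exact ⟨hs.1.resolve_left hα0', hs.2.resolve_left hα1'⟩
  have hac1 : μ₁ ≪ (volume : Measure 𝕋) := fun s hs => (hac hs).1
  have hac2 : μ₂ ≪ (volume : Measure 𝕋) := fun s hs => (hac hs).2
  exact ⟨eq_of_ergodic_of_absolutelyContinuous herg h₁.1 hac1,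
    eq_of_ergodic_of_absolutelyContinuous herg h₂.1 hac2⟩
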